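/- Fix k ≥ 2, an uncountable regular cardinal λ, and a family (η_α : α < λ) of elements of (k+1)^ω satisfying: for every X ∈ [λ]^λ there exist ν ∈ (k+1)^{<ω} and α_0, …, α_k ∈ X such that ν⌢⟨i⟩ is an initial segment of η_{α_i} for each i ≤ k. Define the poset R consisting of finite partial functions p : u → ω (u ∈ [λ]^{<ω}) such that no p-homogeneous subset {α_0,…,α_k} ⊆ u admits such a ν; ordered by reverse inclusion. Then for each α < λ the set D_α = {p ∈ R : α ∈ dom(p)} is dense in R, and there is no filter G on R meeting all D_α for α < λ. -/

import Mathlib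

open Cardinal

def DenseIn {α : Type*} (le : α → α → Prop) (D : Set α) : Prop :=
  ∀ p, ∃ d ∈ D, le d p

def IsFilterIn {α : Type*} (le : α → α → Prop) (G : Set α) : Prop :=
  G.Nonempty ∧ (∀ p ∈ G, ∀ q, le p q → q ∈ G) ∧
    ∀ p ∈ G, ∀ q ∈ G, ∃ r ∈ G, le r p ∧ le r q

/-- `l` is an initial segment of the infinite sequence `g`. -/
def InitSeg {β : Type*} (l : List β) (g : ℕ → β) : Prop :=
  ∀ m (h : m < l.length), l.get ⟨m, h⟩ = g m

/-- There is a `p`-homogeneous set `{α_0,…,α_k} ⊆ S` together with some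
`ν ∈ (k+1)^{<ω}` such that `ν⌢⟨i⟩ ⊑ η_{α_i}` for all `i ≤ k`. -/
def Bad (k : ℕ) (η : Ordinal → ℕ → Fin (k + 1))
    (p : Ordinal → Option ℕ) (S : Set Ordinal) : Prop :=
  ∃ (ν : List (Fin (k + 1))) (α : Fin (k + 1) → Ordinal),
    Function.Injective α ∧ (∀ i, α i ∈ S) ∧ (∀ i j, p (α i) = p (α j)) ∧
    ∀ i, InitSeg (ν ++ [i]) (η (α i))

/-- Conditions of the poset `R_{K,k}`: finite partial functions from λ to ω
admitting no bad homogeneous set. -/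
def Cond (k : ℕ) (lam : Cardinal) (η : Ordinal → ℕ → Fin (k + 1))
    (p : Ordinal → Option ℕ) : Prop :=
  {α | p α ≠ none}.Finite ∧ (∀ α, p α ≠ none → α < lam.ord) ∧
    ¬ Bad k η p {α | p α ≠ none}

def rle (k : ℕ) (lam : Cardinal) (η : Ordinal → ℕ → Fin (k + 1))
    (q p : {p : Ordinal → Option ℕ // Cond k lam η p}) : Prop :=
  ∀ α n, p.1 α = some n → q.1 α = some n

lemma isRegular_lift_aux {c : Cardinal.{u}} (h : c.IsRegular) :
    (Cardinal.lift.{v} c).IsRegular := by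
  constructor
  · rw [← Cardinal.lift_aleph0.{v, u}]
    exact Cardinal.lift_le.2 h.1
  · rw [← Cardinal.lift_ord, ← Ordinal.lift_cof]
    exact Cardinal.lift_le.2 h.2

/-- For k ≥ 2 and λ regular uncountable: given Cohen-like reals η_α witnessing
the splitting property, in the poset R_{K,k} every D_α is dense but no filter
meets all of them. -/
theorem stmt8 (k : ℕ) (hk : 2 ≤ k) (lam : Cardinal)
    (hreg : lam.IsRegular) (hunc : ℵ₀ < lam)
    (η : Ordinal → ℕ → Fin (k + 1))
    (hη : ∀ X : Set Ordinal, X ⊆ Set.Iio lam.ord → #X = Cardinal.lift.{1,0} lam →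
      ∃ (ν : List (Fin (k + 1))) (α : Fin (k + 1) → Ordinal),
        Function.Injective α ∧ (∀ i, α i ∈ X) ∧
        ∀ i, InitSeg (ν ++ [i]) (η (α i))) :
    (∀ β < lam.ord,
      DenseIn (rle k lam η) {p : {p : Ordinal → Option ℕ // Cond k lam η p} | p.1 β ≠ none}) ∧
    ¬ ∃ G : Set {p : Ordinal → Option ℕ // Cond k lam η p},
        IsFilterIn (rle k lam η) G ∧ ∀ β < lam.ord, ∃ p ∈ G, p.1 β ≠ none := by
  constructor
  · -- Density
    intro β hβ p
    by_cases hb : p.1 β ≠ none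
    · exact ⟨p, hb, fun α n h => h⟩
    push_neg at hb
    obtain ⟨hfin, hlt, hbad⟩ := p.2
    set s : Finset Ordinal := hfin.toFinset with hs
    set N : ℕ := (s.image (fun α => (p.1 α).getD 0)).sup id + 1 with hN
    have hfresh : ∀ α, p.1 α ≠ some N := by
      intro α h
      have hα : α ∈ s := by
        rw [hs, Set.Finite.mem_toFinset]; simp [h]
      have hmem : N ∈ s.image (fun α => (p.1 α).getD 0) :=
        Finset.mem_image.2 ⟨α, hα, by simp [h]⟩
      have := Finset.le_sup (f := id) hmem
      simp only [id] at this
      omega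
    set q : Ordinal → Option ℕ := fun γ => if γ = β then some N else p.1 γ with hq
    have hqβ : q β = some N := by simp [hq]
    have hqne : ∀ γ, γ ≠ β → q γ = p.1 γ := fun γ h => by simp [hq, h]
    have hcond : Cond k lam η q := by
      refine ⟨?_, ?_, ?_⟩
      · apply (hfin.insert β).subset
        intro γ hγ
        by_cases h : γ = β
        · exact Or.inl h
        · exact Or.inr (by rw [Set.mem_setOf_eq, ← hqne γ h]; exact hγ)
      · intro γ hγ
        by_cases h : γ = β
        · exact h ▸ hβ
        · exact hlt γ (by rw [← hqne γ h]; exact hγ)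
      · rintro ⟨ν, α, hinj, hmem, hhom, hseg⟩
        by_cases hex : ∃ i, α i = β
        · obtain ⟨i, hi⟩ := hex
          have h01 : (0 : Fin (k + 1)) ≠ 1 := by
            intro h
            have h2 := congrArg Fin.val h
            rw [Fin.val_zero, Fin.val_one', Nat.mod_eq_of_lt (by omega)] at h2
            exact absurd h2 (by omega)
          set j : Fin (k + 1) := if i = 0 then 1 else 0 with hj
          have hji : j ≠ i := by
            rw [hj]; split_ifs with h
            · subst h; exact h01.symm
            · exact Ne.symm h
          have hαjβ : α j ≠ β := fun h => hji (hinj (h.trans hi.symm))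
          have hval : q (α j) = q (α i) := hhom j i
          rw [hi, hqβ, hqne _ hαjβ] at hval
          exact hfresh _ hval
        · push_neg at hex
          apply hbad
          refine ⟨ν, α, hinj, fun i => ?_, fun i j => ?_, hseg⟩
          · have := hmem i
            rw [Set.mem_setOf_eq, hqne _ (hex i)] at this
            exact this
          · have := hhom i j
            rwa [hqne _ (hex i), hqne _ (hex j)] at this
    refine ⟨⟨q, hcond⟩, by simp [hqβ], fun γ m h => ?_⟩
    have hγβ : γ ≠ β := fun he => by rw [he, hb] at h; exact Option.some_ne_none _ h.symm
    show q γ = some m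
    rw [hqne γ hγβ]; exact h
  · -- No filter
    rintro ⟨G, ⟨⟨g0, hg0⟩, hup, hdir⟩, hmeet⟩
    have htrans : ∀ a b c, rle k lam η a b → rle k lam η b c → rle k lam η a c :=
      fun a b c hab hbc γ n h => hab γ n (hbc γ n h)
    have hlist : ∀ l : List {p : Ordinal → Option ℕ // Cond k lam η p},
        (∀ x ∈ l, x ∈ G) → ∃ r ∈ G, ∀ x ∈ l, rle k lam η r x := by
      intro l
      induction l with
      | nil => exact fun _ => ⟨g0, hg0, by simp⟩
      | cons x l ih =>
        intro hl
        obtain ⟨r', hr', hr'l⟩ := ih (fun y hy => hl y (List.mem_cons_of_mem _ hy))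
        obtain ⟨r, hr, hrx, hrr'⟩ := hdir x (hl x List.mem_cons_self) r' hr'
        refine ⟨r, hr, fun y hy => ?_⟩
        rcases List.mem_cons.1 hy with h | h
        · exact h ▸ hrx
        · exact htrans _ _ _ hrr' (hr'l y h)
    have hcol : ∀ β, ∃ n, ∃ p ∈ G, β < lam.ord → p.1 β = some n := by
      intro β
      by_cases hβ : β < lam.ord
      · obtain ⟨p, hp, hpn⟩ := hmeet β hβ
        cases h : p.1 β with
        | none => exact absurd h hpn
        | some m => exact ⟨m, p, hp, fun _ => h⟩
      · exact ⟨0, g0, hg0, fun h => absurd h hβ⟩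
    choose f pf hpfG hpf using hcol
    set X : ℕ → Set Ordinal := fun n => {β | β < lam.ord ∧ f β = n} with hX
    have hXsub : ∀ n, X n ⊆ Set.Iio lam.ord := fun n β hβ => hβ.1
    have hbig : ∃ n, #(X n) = Cardinal.lift.{1, 0} lam := by
      by_contra hno
      push_neg at hno
      have hIio : #(Set.Iio lam.ord) = Cardinal.lift.{1, 0} lam := by
        rw [Ordinal.mk_Iio_ordinal, Cardinal.card_ord]
      have hle : ∀ n, #(X n) ≤ Cardinal.lift.{1, 0} lam := fun n =>
        hIio ▸ Cardinal.mk_le_mk_of_subset (hXsub n)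
      have hlt : ∀ n, #(X n) < Cardinal.lift.{1, 0} lam :=
        fun n => lt_of_le_of_ne (hle n) (hno n)
      have hreg' : (Cardinal.lift.{1, 0} lam).IsRegular := isRegular_lift_aux hreg
      have hcover : Set.Iio lam.ord ⊆ ⋃ n, X n := fun β hβ =>
        Set.mem_iUnion.2 ⟨f β, hβ, rfl⟩
      have h1 : Cardinal.lift.{1, 0} lam ≤ Cardinal.sum (fun n : ℕ => #(X n)) := by
        rw [← hIio]
        have h2 := Cardinal.mk_iUnion_le_sum_mk_lift (ι := ℕ) (f := X)
        rw [Cardinal.lift_id'] at h2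
        exact (Cardinal.mk_le_mk_of_subset hcover).trans h2
      have h2 : Cardinal.sum (fun n : ℕ => #(X n)) < Cardinal.lift.{1, 0} lam := by
        apply Cardinal.sum_lt_lift_of_isRegular hreg' _ hlt
        rw [Cardinal.mk_nat, Cardinal.lift_aleph0, ← Cardinal.lift_aleph0.{1, 0}]
        exact Cardinal.lift_lt.2 hunc
      exact absurd (h1.trans_lt h2) (lt_irrefl _)
    obtain ⟨n, hn⟩ := hbig
    obtain ⟨ν, α, hinj, hmem, hseg⟩ := hη (X n) (hXsub n) hn
    obtain ⟨r, hrG, hrl⟩ := hlist (List.ofFn (fun i => pf (α i))) (by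
      intro x hx
      obtain ⟨i, hi⟩ := List.mem_ofFn.1 hx
      exact hi ▸ hpfG (α i))
    have hval : ∀ i, r.1 (α i) = some n := by
      intro i
      have h1 : (pf (α i)).1 (α i) = some (f (α i)) := hpf _ (hmem i).1
      rw [(hmem i).2] at h1
      exact hrl (pf (α i)) (List.mem_ofFn.2 ⟨i, rfl⟩) _ _ h1
    exact r.2.2.2 ⟨ν, α, hinj,
      fun i => by rw [Set.mem_setOf_eq, hval i]; simp,
      fun i j => by rw [hval, hval], hseg⟩
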